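/- Let A be a ring, M an A-module, and P a projective A-module with Hom_A(P, M) = 0. Let K be a submodule of P such that there exists a surjective A-linear map from P^N onto K for some natural number N. Then Ext^1_A(P/K, M) = 0. -/

import Mathlib

universe u

section ExtAux
open CategoryTheory Limits
noncomputable section

variable {A : Type u} [Ring A]
    {P M : Type u} [AddCommGroup P] [Module A P] [AddCommGroup M] [Module A M]
    [Module.Projective A P]
    {K : Submodule A P} {N : ℕ}
    (g : (Fin N → P) →ₗ[A] K)

instance aux_pi_proj : Module.Projective A (Fin N → P) := by
  haveI : Module.Projective A (DirectSum (Fin N) (fun _ => P)) :=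
    inferInstanceAs (Module.Projective A (DFinsupp (fun _ : Fin N => P)))
  exact Module.Projective.of_equiv (DirectSum.linearEquivFunOnFintype A (Fin N) (fun _ => P))

def myComplex : ChainComplex (ModuleCat.{u} A) ℕ :=
  ChainComplex.mk' (ModuleCat.of A P) (ModuleCat.of A (Fin N → P))
    (ModuleCat.ofHom (K.subtype ∘ₗ g))
    (fun f => ⟨_, Projective.d f, by exact (Category.assoc _ _ _).trans (((Projective.π (kernel f)) ≫= kernel.condition f).trans comp_zero)⟩)

instance (n : ℕ) : Projective ((myComplex g).X n) := by
  haveI : Projective (ModuleCat.of A P) := (IsProjective.iff_projective _).mp inferInstance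
  haveI : Projective (ModuleCat.of A (Fin N → P)) := (IsProjective.iff_projective _).mp inferInstance
  obtain (_ | _ | _ | n) := n
  · exact inferInstanceAs (Projective (ModuleCat.of A P))
  · exact inferInstanceAs (Projective (ModuleCat.of A (Fin N → P)))
  all_goals apply Projective.projective_over

lemma myComplex_d_1_0 :
    (myComplex g).d 1 0 = ModuleCat.ofHom (K.subtype ∘ₗ g) := by
  simp [myComplex]

lemma myComplex_exactAt_succ (n : ℕ) :
    (myComplex g).ExactAt (n + 1) := by
  rw [HomologicalComplex.exactAt_iff' _ (n + 1 + 1) (n + 1) n (by simp) (by simp)]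
  dsimp [myComplex, HomologicalComplex.sc', HomologicalComplex.shortComplexFunctor',
      ChainComplex.mk', ChainComplex.mk]
  match n with
  | 0 => apply CategoryTheory.exact_d_f
  | n + 1 =>
    have h0 := CategoryTheory.exact_d_f ((myComplex g).d (n + 1 + 1) (n + 1))
    have h : ((myComplex g).sc' (n + 1 + 1 + 1) (n + 1 + 1) (n + 1)).Exact := by
      refine ShortComplex.exact_of_iso ?_ h0
      refine ShortComplex.isoMk (ChainComplex.mk'XIso (ModuleCat.of A P) (ModuleCat.of A (Fin N → P))
        (ModuleCat.ofHom (K.subtype ∘ₗ g))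
        (fun f => ⟨_, Projective.d f, by exact (Category.assoc _ _ _).trans (((Projective.π (kernel f)) ≫= kernel.condition f).trans comp_zero)⟩) (n + 1)).symm (Iso.refl _) (Iso.refl _) ?_ ?_
      · dsimp [myComplex]
        exact (Iso.inv_comp_eq _).2 ((ChainComplex.mk'_d (ModuleCat.of A P) (ModuleCat.of A (Fin N → P))
          (ModuleCat.ofHom (K.subtype ∘ₗ g))
          (fun f => ⟨_, Projective.d f, by exact (Category.assoc _ _ _).trans (((Projective.π (kernel f)) ≫= kernel.condition f).trans comp_zero)⟩) (n + 1)).trans (congrArg _ (Category.comp_id _).symm))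
      · exact (Category.id_comp _).trans (Category.comp_id _).symm
    exact h

def myRes (hg : Function.Surjective g) :
    CategoryTheory.ProjectiveResolution (ModuleCat.of A (P ⧸ K)) where
  complex := myComplex g
  π := (ChainComplex.toSingle₀Equiv _ _).symm ⟨ModuleCat.ofHom K.mkQ, by
        rw [myComplex_d_1_0]
        ext x
        exact (Submodule.Quotient.mk_eq_zero K).2 (g x).2⟩
  quasiIso := ⟨fun n => by
    cases n
    · rw [ChainComplex.quasiIsoAt₀_iff, ShortComplex.quasiIso_iff_of_zeros']
      · have hcomp : ModuleCat.ofHom (K.subtype ∘ₗ g) ≫ ModuleCat.ofHom K.mkQ = 0 := by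
          ext1; refine LinearMap.ext fun x => ?_
          exact (Submodule.Quotient.mk_eq_zero K).2 (g x).2
        have hex : (ShortComplex.mk (ModuleCat.ofHom (K.subtype ∘ₗ g))
            (ModuleCat.ofHom K.mkQ) hcomp).Exact := by
          rw [ShortComplex.moduleCat_exact_iff]
          intro x hx
          have hx' : x ∈ K := by
            rw [← Submodule.Quotient.mk_eq_zero]
            exact hx
          obtain ⟨y, hy⟩ := hg ⟨x, hx'⟩
          exact ⟨y, by simp [LinearMap.comp_apply, hy]⟩
        have hepi : Epi (ShortComplex.mk (ModuleCat.ofHom (K.subtype ∘ₗ g))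
            (ModuleCat.ofHom K.mkQ) hcomp).g := by
          rw [ModuleCat.epi_iff_surjective]
          exact Submodule.mkQ_surjective K
        refine (ShortComplex.exact_and_epi_g_iff_of_iso
          (ShortComplex.isoMk (Iso.refl _) (Iso.refl _) (Iso.refl _) ?_ ?_)).2 ⟨hex, hepi⟩
        · simp [myComplex_d_1_0]
          rfl
        · simp [ChainComplex.toSingle₀Equiv]
          rfl
      all_goals rfl
    · rw [quasiIsoAt_iff_exactAt']
      · apply myComplex_exactAt_succ
      · apply ChainComplex.exactAt_succ_single_obj⟩
end


end ExtAux

/-- Let `P` be a projective `A`-module with `Hom_A(P, M) = 0`, and let `K` be a submodule of `P`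
which is an epimorphic image of a finite power `P^N` of `P`.  Then `Ext¹_A(P/K, M) = 0`. -/
theorem ext_one_of_quotient_of_projective_vanishes
    (A : Type u) [Ring A]
    (P M : Type u) [AddCommGroup P] [Module A P] [AddCommGroup M] [Module A M]
    [Module.Projective A P]
    (hPM : ∀ f : P →ₗ[A] M, f = 0)
    (K : Submodule A P) (N : ℕ)
    (g : (Fin N → P) →ₗ[A] K) (hg : Function.Surjective g) :
    CategoryTheory.Limits.IsZero
      (((Ext ℤ (ModuleCat.{u} A) 1).obj
        (Opposite.op (ModuleCat.of A (P ⧸ K)))).obj (ModuleCat.of A M)) := by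
  have hPNM : ∀ f : (Fin N → P) →ₗ[A] M, f = 0 := by
    intro f
    refine LinearMap.ext fun x => ?_
    show f x = 0
    have hx : x = ∑ i, Pi.single i (x i) := (Finset.univ_sum_single x).symm
    rw [hx, map_sum]
    refine Finset.sum_eq_zero fun i _ => ?_
    have h0 := hPM (f ∘ₗ LinearMap.single A (fun _ : Fin N => P) i)
    simpa using DFunLike.congr_fun h0 (x i)
  refine CategoryTheory.Limits.IsZero.of_iso ?_ ((myRes g hg).isoExt 1 (ModuleCat.of A M))
  rw [← HomologicalComplex.exactAt_iff_isZero_homology, HomologicalComplex.exactAt_iff]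
  refine CategoryTheory.ShortComplex.exact_of_isZero_X₂ _ ?_
  haveI : Subsingleton
      ((_root_.HomologicalComplex.sc ((myRes g hg).complex.linearYonedaObj ℤ
        (ModuleCat.of A M)) 1).X₂) := by
    constructor
    intro a b
    exact ModuleCat.hom_ext ((hPNM a.hom).trans (hPNM b.hom).symm)
  exact ModuleCat.isZero_of_subsingleton _
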